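/- Pointwise density domination between spherical Gaussians of nearby radii: Let n be a positive integer, μ ∈ ℝⁿ, and σ, σ' > 0 with σ²/(1 + 1/(10n)) ≤ σ'² ≤ σ². Then for every x ∈ ℝⁿ, the density of N(μ, σ²·I) at x is at least (9/10) times the density of N(μ, σ'²·I) at x. Consequently N(μ, σ²·I) can be written as a mixture 0.9·N(μ, σ'²·I) + 0.1·E for some probability distribution E. -/

import Mathlib

open MeasureTheory

/-- The density of the spherical Gaussian `N(μ, σ² I)` on `ℝⁿ`. -/
noncomputable def sphericalGaussianPdf (n : ℕ) (μ : EuclideanSpace ℝ (Fin n)) (σ : ℝ)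
    (x : EuclideanSpace ℝ (Fin n)) : ℝ :=
  (2 * Real.pi * σ ^ 2) ^ (-(n : ℝ) / 2) * Real.exp (-‖x - μ‖ ^ 2 / (2 * σ ^ 2))

/-- The spherical Gaussian measure `N(μ, σ² I)` on `ℝⁿ`. -/
noncomputable def sphericalGaussian (n : ℕ) (μ : EuclideanSpace ℝ (Fin n)) (σ : ℝ) :
    Measure (EuclideanSpace ℝ (Fin n)) :=
  volume.withDensity fun x => ENNReal.ofReal (sphericalGaussianPdf n μ σ x)

section Aux

open Real

lemma sphericalGaussianPdf_eq (n : ℕ) (μ : EuclideanSpace ℝ (Fin n)) {σ : ℝ} (hσ : 0 < σ) :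
    sphericalGaussianPdf n μ σ = fun x =>
      (2 * π * σ ^ 2) ^ (-(n : ℝ) / 2) * rexp (-(1 / (2 * σ ^ 2)) * ‖x - μ‖ ^ 2) := by
  funext x
  unfold sphericalGaussianPdf
  congr 1
  congr 1
  field_simp

lemma integrable_exp_sub (n : ℕ) (μ : EuclideanSpace ℝ (Fin n)) {b : ℝ} (hb : 0 < b) :
    Integrable (fun x : EuclideanSpace ℝ (Fin n) => rexp (-b * ‖x - μ‖ ^ 2)) := by
  have h0 : Integrable (fun x : EuclideanSpace ℝ (Fin n) => rexp (-b * ‖x‖ ^ 2)) := by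
    have := (GaussianFourier.integrable_cexp_neg_mul_sq_norm_add (V := EuclideanSpace ℝ (Fin n))
      (show (0:ℝ) < (Complex.ofReal b).re from hb) 0 0).re
    refine this.congr (Filter.Eventually.of_forall fun x => ?_)
    simp [← Complex.ofReal_pow, ← Complex.ofReal_mul, ← Complex.ofReal_neg, ← Complex.ofReal_exp]
  exact h0.comp_sub_right μ

lemma integral_exp_sub (n : ℕ) (μ : EuclideanSpace ℝ (Fin n)) {b : ℝ} (hb : 0 < b) :
    ∫ x : EuclideanSpace ℝ (Fin n), rexp (-b * ‖x - μ‖ ^ 2) = (π / b) ^ ((n:ℝ) / 2) := by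
  rw [integral_sub_right_eq_self (fun x => rexp (-b * ‖x‖ ^ 2)) μ,
    GaussianFourier.integral_rexp_neg_mul_sq_norm hb]
  simp

lemma sphericalGaussianPdf_integrable (n : ℕ) (μ : EuclideanSpace ℝ (Fin n)) {σ : ℝ}
    (hσ : 0 < σ) : Integrable (sphericalGaussianPdf n μ σ) := by
  rw [sphericalGaussianPdf_eq n μ hσ]
  exact (integrable_exp_sub n μ (by positivity)).const_mul _

lemma sphericalGaussianPdf_integral (n : ℕ) (μ : EuclideanSpace ℝ (Fin n)) {σ : ℝ}
    (hσ : 0 < σ) : ∫ x, sphericalGaussianPdf n μ σ x = 1 := by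
  rw [sphericalGaussianPdf_eq n μ hσ]
  rw [integral_const_mul, integral_exp_sub n μ (by positivity)]
  have h1 : π / (1 / (2 * σ ^ 2)) = 2 * π * σ ^ 2 := by field_simp
  rw [h1, ← Real.rpow_add (by positivity),
    show -(n:ℝ)/2 + (n:ℝ)/2 = 0 by ring, Real.rpow_zero]

lemma sphericalGaussianPdf_nonneg (n : ℕ) (μ : EuclideanSpace ℝ (Fin n)) (σ : ℝ)
    (x : EuclideanSpace ℝ (Fin n)) : 0 ≤ sphericalGaussianPdf n μ σ x := by
  unfold sphericalGaussianPdf; positivity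

lemma sphericalGaussianPdf_measurable (n : ℕ) (μ : EuclideanSpace ℝ (Fin n)) (σ : ℝ) :
    Measurable (sphericalGaussianPdf n μ σ) := by
  unfold sphericalGaussianPdf
  fun_prop

lemma pointwise_dom (n : ℕ) (hn : 0 < n) (μ : EuclideanSpace ℝ (Fin n)) (σ σ' : ℝ)
    (hσ : 0 < σ) (hσ' : 0 < σ')
    (h1 : σ ^ 2 / (1 + 1 / (10 * (n : ℝ))) ≤ σ' ^ 2) (h2 : σ' ^ 2 ≤ σ ^ 2)
    (x : EuclideanSpace ℝ (Fin n)) :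
    (9 / 10) * sphericalGaussianPdf n μ σ' x ≤ sphericalGaussianPdf n μ σ x := by
  have hnR : (0:ℝ) < n := by exact_mod_cast hn
  set t : ℝ := σ ^ 2 / σ' ^ 2 with ht
  have ht1 : 1 ≤ t := (one_le_div (by positivity)).2 h2
  have hc : (0:ℝ) < 1 + 1 / (10 * (n:ℝ)) := by positivity
  have ht2 : t ≤ 1 + 1 / (10 * (n : ℝ)) := by
    rw [ht, div_le_iff₀ (by positivity)]
    rw [div_le_iff₀ hc] at h1
    linarith [h1]
  -- bound t ^ n ≤ 100/81
  have htn : t ^ n ≤ 100 / 81 := by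
    have : t ^ n ≤ rexp (1 / (10 * (n:ℝ))) ^ n := by
      apply pow_le_pow_left₀ (by linarith) (ht2.trans ?_)
      have := Real.add_one_le_exp (1 / (10 * (n:ℝ)))
      linarith
    rw [← Real.exp_nat_mul] at this
    have hx : (n:ℝ) * (1 / (10 * (n:ℝ))) = 1 / 10 := by field_simp
    rw [hx] at this
    have hexp : rexp (1/10) ≤ 10 / 9 := by
      have h := Real.add_one_le_exp (-(1/10 : ℝ))
      have hpos : (0:ℝ) < rexp (-(1/10 : ℝ)) := Real.exp_pos _
      have : rexp (1/10 : ℝ) = (rexp (-(1/10:ℝ)))⁻¹ := by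
        rw [← Real.exp_neg]; norm_num
      rw [this]
      rw [inv_le_comm₀ (by positivity) (by norm_num)]
      linarith
    linarith
  -- bound t ^ ((n:ℝ)/2) ≤ 10/9
  have ht0 : (0:ℝ) < t := by linarith
  have hhalf : t ^ ((n:ℝ)/2) ≤ 10 / 9 := by
    have hsq : (t ^ ((n:ℝ)/2)) ^ 2 = t ^ n := by
      rw [← Real.rpow_natCast (t ^ ((n:ℝ)/2)) 2, ← Real.rpow_mul ht0.le]
      rw [show (n:ℝ)/2 * (2:ℕ) = (n:ℝ) by push_cast; ring, Real.rpow_natCast]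
    nlinarith [Real.rpow_pos_of_pos ht0 ((n:ℝ)/2), sq_nonneg (t ^ ((n:ℝ)/2) - 10/9)]
  -- prefactor comparison
  have hA : (2 * π * σ ^ 2) ^ (-(n : ℝ) / 2) =
      (2 * π * σ' ^ 2) ^ (-(n : ℝ) / 2) * t ^ (-(n:ℝ)/2) := by
    rw [← Real.mul_rpow (by positivity) ht0.le]
    congr 1
    rw [ht]; field_simp
  have hApos : (0:ℝ) < (2 * π * σ' ^ 2) ^ (-(n : ℝ) / 2) :=
    Real.rpow_pos_of_pos (by positivity) _
  have hApre : (9/10 : ℝ) * (2 * π * σ' ^ 2) ^ (-(n : ℝ) / 2) ≤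
      (2 * π * σ ^ 2) ^ (-(n : ℝ) / 2) := by
    rw [hA]
    have hneg : t ^ (-(n:ℝ)/2) = (t ^ ((n:ℝ)/2))⁻¹ := by
      rw [show -(n:ℝ)/2 = -((n:ℝ)/2) by ring, Real.rpow_neg ht0.le]
    rw [hneg, mul_comm (9/10 : ℝ) _, mul_comm _ ((t ^ ((n:ℝ)/2))⁻¹)]
    rw [mul_comm ((t ^ ((n:ℝ)/2))⁻¹) _]
    apply mul_le_mul_of_nonneg_left _ hApos.le
    rw [le_inv_comm₀ (by norm_num) (Real.rpow_pos_of_pos ht0 _)]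
    rw [show ((9:ℝ)/10)⁻¹ = 10/9 by norm_num]; exact hhalf
  -- exponential comparison
  have hexp : rexp (-‖x - μ‖ ^ 2 / (2 * σ' ^ 2)) ≤ rexp (-‖x - μ‖ ^ 2 / (2 * σ ^ 2)) := by
    apply Real.exp_le_exp.2
    rw [neg_div, neg_div, neg_le_neg_iff]
    apply div_le_div_of_nonneg_left (by positivity) (by positivity) (by linarith)
  unfold sphericalGaussianPdf
  calc 9/10 * ((2 * π * σ' ^ 2) ^ (-(n : ℝ) / 2) * rexp (-‖x - μ‖ ^ 2 / (2 * σ' ^ 2)))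
      = (9/10 * (2 * π * σ' ^ 2) ^ (-(n : ℝ) / 2)) * rexp (-‖x - μ‖ ^ 2 / (2 * σ' ^ 2)) := by
        ring
    _ ≤ (2 * π * σ ^ 2) ^ (-(n : ℝ) / 2) * rexp (-‖x - μ‖ ^ 2 / (2 * σ ^ 2)) := by
        apply mul_le_mul hApre hexp (Real.exp_pos _).le (Real.rpow_pos_of_pos (by positivity) _).le

end Aux

/-- Pointwise density domination between spherical Gaussians of nearby radii, and the
resulting mixture decomposition `N(μ,σ²I) = 0.9 N(μ,σ'²I) + 0.1 E`. -/
theorem stmt_11 (n : ℕ) (hn : 0 < n) (μ : EuclideanSpace ℝ (Fin n)) (σ σ' : ℝ)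
    (hσ : 0 < σ) (hσ' : 0 < σ')
    (h1 : σ ^ 2 / (1 + 1 / (10 * (n : ℝ))) ≤ σ' ^ 2) (h2 : σ' ^ 2 ≤ σ ^ 2) :
    (∀ x : EuclideanSpace ℝ (Fin n),
      (9 / 10) * sphericalGaussianPdf n μ σ' x ≤ sphericalGaussianPdf n μ σ x) ∧
    ∃ E : Measure (EuclideanSpace ℝ (Fin n)), IsProbabilityMeasure E ∧
      sphericalGaussian n μ σ =
        ENNReal.ofReal (9 / 10) • sphericalGaussian n μ σ' + ENNReal.ofReal (1 / 10) • E := by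
  have hpt := pointwise_dom n hn μ σ σ' hσ hσ' h1 h2
  refine ⟨hpt, ?_⟩
  -- the residual density
  set h : EuclideanSpace ℝ (Fin n) → ℝ :=
    fun x => 10 * (sphericalGaussianPdf n μ σ x - 9/10 * sphericalGaussianPdf n μ σ' x) with hh
  have hh_nonneg : ∀ x, 0 ≤ h x := fun x => by
    have := hpt x; simp only [hh]; linarith
  have hh_meas : Measurable h := by
    apply Measurable.const_mul
    exact (sphericalGaussianPdf_measurable n μ σ).sub
      ((sphericalGaussianPdf_measurable n μ σ').const_mul _)
  have hh_int : Integrable h :=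
    (((sphericalGaussianPdf_integrable n μ hσ).sub
      ((sphericalGaussianPdf_integrable n μ hσ').const_mul _)).const_mul _)
  refine ⟨volume.withDensity (fun x => ENNReal.ofReal (h x)), ?_, ?_⟩
  · constructor
    rw [withDensity_apply _ MeasurableSet.univ, Measure.restrict_univ,
      ← ofReal_integral_eq_lintegral_ofReal hh_int (Filter.Eventually.of_forall hh_nonneg)]
    have : ∫ x, h x = 1 := by
      simp only [hh]
      rw [integral_const_mul, integral_sub (sphericalGaussianPdf_integrable n μ hσ)
        ((sphericalGaussianPdf_integrable n μ hσ').const_mul _), integral_const_mul,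
        sphericalGaussianPdf_integral n μ hσ, sphericalGaussianPdf_integral n μ hσ']
      norm_num
    rw [this]; norm_num
  · unfold sphericalGaussian
    rw [← withDensity_smul _ ((sphericalGaussianPdf_measurable n μ σ').ennreal_ofReal),
      ← withDensity_smul _ (hh_meas.ennreal_ofReal),
      ← withDensity_add_right _ ((hh_meas.ennreal_ofReal).const_smul (ENNReal.ofReal (1/10)))]
    congr 1
    funext x
    simp only [Pi.add_apply, Pi.smul_apply, smul_eq_mul]
    rw [← ENNReal.ofReal_mul (by norm_num), ← ENNReal.ofReal_mul (by norm_num),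
      ← ENNReal.ofReal_add (mul_nonneg (by norm_num) (sphericalGaussianPdf_nonneg n μ σ' x))
        (mul_nonneg (by norm_num) (hh_nonneg x))]
    congr 1
    simp only [hh]
    ring
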